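/- Let Q be a commutative ring, f ∈ Q a nonzerodivisor, and (F^0, F^1, s^0, s^1) a matrix factorization of f. Then over R = Q/(f), the induced sequence F^0 ⊗ R → F^1 ⊗ R → coker(s^0) → 0 is exact and ker(s̄^0) = im(s̄^1), where s̄^i denote the reductions mod f; i.e., the 2-periodic complex ⋯ → F^1⊗R → F^0⊗R → F^1⊗R is exact. -/
import Mathlib

private lemma smul_inj {Q M : Type*} [CommRing Q] [AddCommGroup M] [Module Q M]
    [Module.Free Q M] {f : Q} (hf : f ∈ nonZeroDivisors Q) {x y : M}
    (h : f • x = f • y) : x = y := by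
  let b := Module.Free.chooseBasis Q M
  apply b.repr.injective
  ext i
  have := congrArg (fun z => b.repr z i) h
  simp only [map_smul, Finsupp.smul_apply, smul_eq_mul] at this
  exact mul_cancel_left_mem_nonZeroDivisors hf |>.mp this

private lemma mem_T {Q M : Type*} [CommRing Q] [AddCommGroup M] [Module Q M]
    {f : Q} {x : M} : x ∈ (Ideal.span {f} • ⊤ : Submodule Q M) ↔ ∃ y, f • y = x := by
  rw [Submodule.ideal_span_singleton_smul]
  constructor
  · intro h
    rw [← SetLike.mem_coe, Submodule.coe_pointwise_smul] at h
    obtain ⟨y, -, rfl⟩ := Set.mem_smul_set.mp h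
    exact ⟨y, rfl⟩
  · rintro ⟨y, rfl⟩
    exact Submodule.smul_mem_pointwise_smul y f ⊤ trivial

private lemma exact_aux {Q : Type*} [CommRing Q] {f : Q} (hf : f ∈ nonZeroDivisors Q)
    {F0 F1 : Type*} [AddCommGroup F0] [Module Q F0] [Module.Free Q F0]
    [AddCommGroup F1] [Module Q F1] [Module.Free Q F1]
    (s0 : F0 →ₗ[Q] F1) (s1 : F1 →ₗ[Q] F0)
    (h10 : s1 ∘ₗ s0 = f • (LinearMap.id : F0 →ₗ[Q] F0))
    (h01 : s0 ∘ₗ s1 = f • (LinearMap.id : F1 →ₗ[Q] F1))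
    (hc0 : (Ideal.span {f} • ⊤ : Submodule Q F0) ≤
      (Ideal.span {f} • ⊤ : Submodule Q F1).comap s0)
    (hc1 : (Ideal.span {f} • ⊤ : Submodule Q F1) ≤
      (Ideal.span {f} • ⊤ : Submodule Q F0).comap s1) :
    Function.Exact (Submodule.mapQ _ _ s1 hc1) (Submodule.mapQ _ _ s0 hc0) := by
  intro y
  obtain ⟨x, rfl⟩ := Submodule.Quotient.mk_surjective _ y
  rw [Submodule.mapQ_apply, Submodule.Quotient.mk_eq_zero, mem_T]
  constructor
  · rintro ⟨z, hz⟩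
    have h1 : f • x = f • s1 z := by
      have := congrFun (congrArg DFunLike.coe h10) x
      simp only [LinearMap.comp_apply, LinearMap.smul_apply, LinearMap.id_apply] at this
      rw [← this, ← hz, map_smul]
    refine ⟨Submodule.Quotient.mk z, ?_⟩
    rw [Submodule.mapQ_apply, smul_inj hf h1]
  · rintro ⟨z, hz⟩
    obtain ⟨w, rfl⟩ := Submodule.Quotient.mk_surjective _ z
    rw [Submodule.mapQ_apply] at hz
    have : x - s1 w ∈ (Ideal.span {f} • ⊤ : Submodule Q F0) := by
      rw [← Submodule.Quotient.mk_eq_zero, Submodule.Quotient.mk_sub, hz, sub_self]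
    obtain ⟨u, hu⟩ := mem_T.mp this
    have hw : s0 (s1 w) = f • w := by
      have := congrFun (congrArg DFunLike.coe h01) w
      simpa using this
    refine ⟨w + s0 u, ?_⟩
    have : x = s1 w + f • u := by rw [hu]; abel
    rw [this, map_add, map_smul, hw, smul_add]

/-- Let `Q` be a commutative ring, `f` a nonzerodivisor, `R = Q/(f)`, and
`(F⁰, F¹, s⁰, s¹)` a matrix factorization of `f`.  Identifying `Fⁱ ⊗ R` with
`Fⁱ/fFⁱ`, the induced sequence `F⁰⊗R → F¹⊗R → coker s⁰ → 0` is exact, and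
`ker s̄⁰ = im s̄¹` and `ker s̄¹ = im s̄⁰`; i.e. the 2-periodic complex
`⋯ → F¹⊗R → F⁰⊗R → F¹⊗R → ⋯` is exact. -/
theorem matrixFactorization_two_periodic_exact
    (Q : Type*) [CommRing Q] (f : Q) (hf : f ∈ nonZeroDivisors Q)
    (F0 F1 : Type*)
    [AddCommGroup F0] [Module Q F0] [Module.Free Q F0] [Module.Finite Q F0]
    [AddCommGroup F1] [Module Q F1] [Module.Free Q F1] [Module.Finite Q F1]
    (s0 : F0 →ₗ[Q] F1) (s1 : F1 →ₗ[Q] F0)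
    (h10 : s1 ∘ₗ s0 = f • (LinearMap.id : F0 →ₗ[Q] F0))
    (h01 : s0 ∘ₗ s1 = f • (LinearMap.id : F1 →ₗ[Q] F1)) :
    let I : Ideal Q := Ideal.span {f}
    let T0 : Submodule Q F0 := I • ⊤
    let T1 : Submodule Q F1 := I • ⊤
    -- the reduction `s̄⁰ : F⁰ ⊗ R = F⁰/fF⁰ → F¹/fF¹ = F¹ ⊗ R`
    let s0bar : (F0 ⧸ T0) →ₗ[Q] (F1 ⧸ T1) := Submodule.mapQ T0 T1 s0
      (by rw [← Submodule.map_le_iff_le_comap, Submodule.map_smul'']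
          exact Submodule.smul_mono le_rfl le_top)
    -- the reduction `s̄¹ : F¹ ⊗ R → F⁰ ⊗ R`
    let s1bar : (F1 ⧸ T1) →ₗ[Q] (F0 ⧸ T0) := Submodule.mapQ T1 T0 s1
      (by rw [← Submodule.map_le_iff_le_comap, Submodule.map_smul'']
          exact Submodule.smul_mono le_rfl le_top)
    -- the canonical map `F¹ ⊗ R → coker s⁰`
    let π : (F1 ⧸ T1) →ₗ[Q] (F1 ⧸ LinearMap.range s0) :=
      Submodule.mapQ T1 (LinearMap.range s0) LinearMap.id
      (by rw [← Submodule.map_le_iff_le_comap, Submodule.map_id]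
          refine Submodule.smul_le.2 fun r hr m _ => ?_
          obtain ⟨c, rfl⟩ := Ideal.mem_span_singleton'.mp hr
          refine ⟨c • s1 m, ?_⟩
          have hm := congrFun (congrArg DFunLike.coe h01) m
          simp only [LinearMap.comp_apply, LinearMap.smul_apply, LinearMap.id_apply] at hm
          rw [map_smul, hm, mul_smul])
    Function.Exact s0bar π ∧ Function.Surjective π ∧
      Function.Exact s1bar s0bar ∧ Function.Exact s0bar s1bar := by
  intro I T0 T1 s0bar s1bar π
  have hTr : T1 ≤ LinearMap.range s0 := by
    intro x hx
    obtain ⟨y, rfl⟩ := mem_T.mp hx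
    refine ⟨s1 y, ?_⟩
    have := congrFun (congrArg DFunLike.coe h01) y
    simpa using this
  refine ⟨?_, ?_, exact_aux hf s0 s1 h10 h01 _ _, exact_aux hf s1 s0 h01 h10 _ _⟩
  · intro y
    obtain ⟨x, rfl⟩ := Submodule.Quotient.mk_surjective _ y
    rw [Submodule.mapQ_apply, LinearMap.id_apply, Submodule.Quotient.mk_eq_zero]
    constructor
    · rintro ⟨z, hz⟩
      exact ⟨Submodule.Quotient.mk z, by rw [Submodule.mapQ_apply, hz]⟩
    · rintro ⟨z, hz⟩
      obtain ⟨w, rfl⟩ := Submodule.Quotient.mk_surjective _ z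
      rw [Submodule.mapQ_apply] at hz
      have : x - s0 w ∈ T1 := by
        rw [← Submodule.Quotient.mk_eq_zero, Submodule.Quotient.mk_sub, hz, sub_self]
      have h2 : x - s0 w ∈ LinearMap.range s0 := hTr this
      obtain ⟨u, hu⟩ := h2
      exact ⟨w + u, by rw [map_add, hu]; abel⟩
  · intro y
    obtain ⟨x, rfl⟩ := Submodule.Quotient.mk_surjective _ y
    exact ⟨Submodule.Quotient.mk x, by rw [Submodule.mapQ_apply, LinearMap.id_apply]⟩
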